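/- Let Z be standard normal, X_z = (Z - z conditioned on Z > z), and m(z) = E[X_z]. For every δ with 0 < δ < 1 there exists a constant c(δ) > 0 such that for all z ∈ ℝ: P(m(z) < X_z < (1+δ)m(z)) ≥ c(δ) and P((1-δ)m(z) < X_z < m(z)) ≥ c(δ). -/

import Mathlib

set_option maxHeartbeats 1000000
open MeasureTheory Set Filter

/-- The density on `(0,∞)` of `X_z = (Z - z | Z > z)` for a standard normal `Z`. -/
noncomputable def condDens (z x : ℝ) : ℝ :=
  Real.exp (-(x + z) ^ 2 / 2) / (∫ t in Set.Ioi z, Real.exp (-t ^ 2 / 2))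

/-- The conditional mean overshoot `m z = E[X_z]`. -/
noncomputable def condMean (z : ℝ) : ℝ :=
  Real.exp (-z ^ 2 / 2) / (∫ t in Set.Ioi z, Real.exp (-t ^ 2 / 2)) - z

noncomputable def Gt (z : ℝ) : ℝ := ∫ t in Set.Ioi z, Real.exp (-t ^ 2 / 2)

lemma integ_exp : Integrable (fun t : ℝ => Real.exp (-t ^ 2 / 2)) := by
  have h := integrable_exp_neg_mul_sq (by norm_num : (0:ℝ) < 1/2)
  convert h using 2 with t
  ring_nf

lemma integ_mul_exp : Integrable (fun t : ℝ => t * Real.exp (-t ^ 2 / 2)) := by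
  have h := integrable_mul_exp_neg_mul_sq (by norm_num : (0:ℝ) < 1/2)
  convert h using 2 with t
  ring_nf

lemma Gt_split {a b : ℝ} (h : a ≤ b) :
    Gt a = (∫ t in Set.Ioc a b, Real.exp (-t ^ 2 / 2)) + Gt b := by
  rw [Gt, Gt, ← Set.Ioc_union_Ioi_eq_Ioi h,
    setIntegral_union (Set.Ioc_disjoint_Ioi le_rfl) measurableSet_Ioi
      integ_exp.integrableOn integ_exp.integrableOn]

lemma Gt_anti {a b : ℝ} (h : a ≤ b) : Gt b ≤ Gt a := by
  rw [Gt_split h]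
  have : 0 ≤ ∫ t in Set.Ioc a b, Real.exp (-t ^ 2 / 2) :=
    setIntegral_nonneg measurableSet_Ioc (fun t _ => (Real.exp_pos _).le)
  linarith

lemma sq_le_max {a b t : ℝ} (h1 : a ≤ t) (h2 : t ≤ b) : t ^ 2 ≤ max (a ^ 2) (b ^ 2) := by
  rcases le_total t 0 with ht | ht
  · exact le_max_of_le_left (by nlinarith)
  · exact le_max_of_le_right (by nlinarith)

lemma Gt_sub_ge {a b : ℝ} (h : a ≤ b) :
    (b - a) * Real.exp (-(max (a ^ 2) (b ^ 2)) / 2) ≤ Gt a - Gt b := by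
  have hsplit : Gt a - Gt b = ∫ t in Set.Ioc a b, Real.exp (-t ^ 2 / 2) := by
    rw [Gt_split h]; ring
  rw [hsplit]
  have := setIntegral_ge_of_const_le (c := Real.exp (-(max (a ^ 2) (b ^ 2)) / 2))
    (measurableSet_Ioc (a := a) (b := b))
    (by simp [Real.volume_Ioc] : volume (Set.Ioc a b) ≠ ⊤)
    (fun t ht => Real.exp_le_exp.2 (by
      have := sq_le_max ht.1.le ht.2
      linarith))
    integ_exp.integrableOn
  rw [Real.volume_real_Ioc_of_le h, smul_eq_mul] at this
  linarith [this]

lemma Gt_pos (z : ℝ) : 0 < Gt z := by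
  have h1 := Gt_sub_ge (by linarith : z ≤ z + 1)
  have h2 : 0 ≤ Gt (z + 1) :=
    setIntegral_nonneg measurableSet_Ioi (fun t _ => (Real.exp_pos _).le)
  have h3 : 0 < (z + 1 - z) * Real.exp (-(max (z ^ 2) ((z+1) ^ 2)) / 2) := by
    have := Real.exp_pos (-(max (z ^ 2) ((z+1) ^ 2)) / 2); nlinarith
  linarith

lemma Gt_le_total (z : ℝ) : Gt z ≤ Real.sqrt (2 * Real.pi) := by
  have h1 : Gt z ≤ ∫ t : ℝ, Real.exp (-t ^ 2 / 2) :=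
    setIntegral_le_integral integ_exp (Filter.Eventually.of_forall fun t => (Real.exp_pos _).le)
  have h2 : ∫ t : ℝ, Real.exp (-t ^ 2 / 2) = Real.sqrt (2 * Real.pi) := by
    have he : (fun t : ℝ => Real.exp (-t ^ 2 / 2)) = fun t : ℝ => Real.exp (-(1/2 : ℝ) * t ^ 2) :=
      funext fun t => by ring_nf
    rw [he, integral_gaussian, show Real.pi / (1/2 : ℝ) = 2 * Real.pi by ring]
  linarith



lemma tendsto_exp_sq : Tendsto (fun t : ℝ => Real.exp (-t ^ 2 / 2)) atTop (nhds 0) := by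
  apply Real.tendsto_exp_atBot.comp
  have h1 : Tendsto (fun t : ℝ => t ^ 2 / 2) atTop atTop :=
    (tendsto_pow_atTop two_ne_zero).atTop_div_const (by norm_num)
  have := tendsto_neg_atTop_atBot.comp h1
  apply this.congr
  intro t; simp [Function.comp]; ring

lemma deriv_exp_sq (t : ℝ) : HasDerivAt (fun s : ℝ => -Real.exp (-s ^ 2 / 2))
    (t * Real.exp (-t ^ 2 / 2)) t := by
  have h1 : HasDerivAt (fun s : ℝ => -s ^ 2 / 2) (-t) t := by
    have := ((hasDerivAt_pow 2 t).neg).div_const 2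
    exact this.congr_deriv (by push_cast; ring)
  have := (h1.exp).neg
  exact this.congr_deriv (by ring)

lemma I1 (z : ℝ) : ∫ t in Set.Ioi z, t * Real.exp (-t ^ 2 / 2) = Real.exp (-z ^ 2 / 2) := by
  have := integral_Ioi_of_hasDerivAt_of_tendsto' (a := z)
    (fun x _ => deriv_exp_sq x) integ_mul_exp.integrableOn (tendsto_exp_sq.neg)
  rw [this]; simp

-- integrability of (1/t^2) * exp and (1/t^4) * exp on Ioi z for z > 0
lemma integ_pow_exp {z : ℝ} (hz : 0 < z) (n : ℕ) :
    IntegrableOn (fun t : ℝ => 1 / t ^ n * Real.exp (-t ^ 2 / 2)) (Set.Ioi z) := by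
  apply Integrable.mono' (g := fun t : ℝ => (1 / z ^ n) * Real.exp (-t ^ 2 / 2))
    (integ_exp.integrableOn.const_mul _)
  · apply ContinuousOn.aestronglyMeasurable _ measurableSet_Ioi
    apply ContinuousOn.mul
    · apply ContinuousOn.div continuousOn_const (continuousOn_pow n)
      intro t ht
      exact pow_ne_zero n (ne_of_gt (lt_trans hz ht))
    · exact (Real.continuous_exp.comp (by continuity)).continuousOn
  · filter_upwards [ae_restrict_mem measurableSet_Ioi] with t ht
    have htz : (0:ℝ) < t := lt_trans hz ht
    rw [Real.norm_eq_abs, abs_mul, abs_of_nonneg (Real.exp_pos _).le,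
      abs_of_nonneg (by positivity : (0:ℝ) ≤ 1 / t ^ n)]
    have h1 : 1 / t ^ n ≤ 1 / z ^ n := by
      apply one_div_le_one_div_of_le (by positivity)
      exact pow_le_pow_left₀ hz.le (le_of_lt ht) n
    exact mul_le_mul_of_nonneg_right h1 (Real.exp_pos _).le

lemma I2 {z : ℝ} (hz : 0 < z) :
    ∫ t in Set.Ioi z, (1 + 1 / t ^ 2) * Real.exp (-t ^ 2 / 2) = Real.exp (-z ^ 2 / 2) / z := by
  have hderiv : ∀ x ∈ Set.Ici z, HasDerivAt (fun s : ℝ => -Real.exp (-s ^ 2 / 2) / s)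
      ((1 + 1 / x ^ 2) * Real.exp (-x ^ 2 / 2)) x := by
    intro x hx
    have hx0 : x ≠ 0 := ne_of_gt (lt_of_lt_of_le hz hx)
    have := (deriv_exp_sq x).div (hasDerivAt_id x) hx0
    refine this.congr_deriv ?_
    simp only [id]
    field_simp
    ring
  have hint : IntegrableOn (fun t : ℝ => (1 + 1 / t ^ 2) * Real.exp (-t ^ 2 / 2)) (Set.Ioi z) := by
    have heq : (fun t : ℝ => (1 + 1 / t ^ 2) * Real.exp (-t ^ 2 / 2))
        = fun t : ℝ => Real.exp (-t ^ 2 / 2) + 1 / t ^ 2 * Real.exp (-t ^ 2 / 2) :=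
      funext fun t => by ring
    rw [heq]
    exact integ_exp.integrableOn.add (integ_pow_exp hz 2)
  have htend : Tendsto (fun s : ℝ => -Real.exp (-s ^ 2 / 2) / s) atTop (nhds 0) := by
    have := (tendsto_exp_sq.neg).mul tendsto_inv_atTop_zero
    simpa [div_eq_mul_inv] using this
  have := integral_Ioi_of_hasDerivAt_of_tendsto' hderiv hint htend
  rw [this]; field_simp; ring

lemma I3 {z : ℝ} (hz : 0 < z) :
    ∫ t in Set.Ioi z, (1 / t ^ 2 + 3 / t ^ 4) * Real.exp (-t ^ 2 / 2)
      = Real.exp (-z ^ 2 / 2) / z ^ 3 := by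
  have hderiv : ∀ x ∈ Set.Ici z, HasDerivAt (fun s : ℝ => -Real.exp (-s ^ 2 / 2) / s ^ 3)
      ((1 / x ^ 2 + 3 / x ^ 4) * Real.exp (-x ^ 2 / 2)) x := by
    intro x hx
    have hx0 : x ≠ 0 := ne_of_gt (lt_of_lt_of_le hz hx)
    have hp : HasDerivAt (fun s : ℝ => s ^ 3) (3 * x ^ 2) x := by
      have h := hasDerivAt_pow 3 x
      have : ((3:ℕ):ℝ) * x ^ (3-1) = 3 * x ^ 2 := by norm_num
      rw [this] at h; exact h
    have := (deriv_exp_sq x).div hp (pow_ne_zero 3 hx0)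
    refine this.congr_deriv ?_
    field_simp
    try ring
  have hint : IntegrableOn (fun t : ℝ => (1 / t ^ 2 + 3 / t ^ 4) * Real.exp (-t ^ 2 / 2))
      (Set.Ioi z) := by
    have heq : (fun t : ℝ => (1 / t ^ 2 + 3 / t ^ 4) * Real.exp (-t ^ 2 / 2))
        = fun t : ℝ => 1 / t ^ 2 * Real.exp (-t ^ 2 / 2)
            + 3 * (1 / t ^ 4 * Real.exp (-t ^ 2 / 2)) :=
      funext fun t => by ring
    rw [heq]
    exact (integ_pow_exp hz 2).add ((integ_pow_exp hz 4).const_mul 3)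
  have htend : Tendsto (fun s : ℝ => -Real.exp (-s ^ 2 / 2) / s ^ 3) atTop (nhds 0) := by
    have h3 : Tendsto (fun s : ℝ => (s ^ 3)⁻¹) atTop (nhds 0) := by
      apply tendsto_inv_atTop_zero.comp
      exact tendsto_pow_atTop (by norm_num)
    have := (tendsto_exp_sq.neg).mul h3
    simpa [div_eq_mul_inv] using this
  have := integral_Ioi_of_hasDerivAt_of_tendsto' hderiv hint htend
  rw [this]; field_simp; ring


noncomputable def Jt (z : ℝ) : ℝ := ∫ t in Set.Ioi z, 1 / t ^ 2 * Real.exp (-t ^ 2 / 2)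
noncomputable def Kt (z : ℝ) : ℝ := ∫ t in Set.Ioi z, 1 / t ^ 4 * Real.exp (-t ^ 2 / 2)

lemma B1 {z : ℝ} (hz : 0 < z) : Gt z + Jt z = Real.exp (-z ^ 2 / 2) / z := by
  rw [← I2 hz, Gt, Jt, ← integral_add integ_exp.integrableOn (integ_pow_exp hz 2)]
  congr 1; funext t; ring

lemma B2 {z : ℝ} (hz : 0 < z) : Jt z + 3 * Kt z = Real.exp (-z ^ 2 / 2) / z ^ 3 := by
  rw [← I3 hz, Jt, Kt, ← integral_const_mul,
    ← integral_add (integ_pow_exp hz 2) ((integ_pow_exp hz 4).const_mul 3)]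
  congr 1; funext t; ring

lemma Kt_nonneg (z : ℝ) : 0 ≤ Kt z :=
  setIntegral_nonneg measurableSet_Ioi fun t _ => by positivity

lemma Jt_nonneg (z : ℝ) : 0 ≤ Jt z :=
  setIntegral_nonneg measurableSet_Ioi fun t _ => by positivity

lemma Jt_pos {z : ℝ} (hz : 0 < z) : 0 < Jt z := by
  rw [Jt, setIntegral_pos_iff_support_of_nonneg_ae
    (Filter.Eventually.of_forall fun t => by positivity) (integ_pow_exp hz 2)]
  have hsub : Set.Ioi z ⊆ Function.support (fun t : ℝ => 1 / t ^ 2 * Real.exp (-t ^ 2 / 2)) := by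
    intro t ht
    have h0 : (0:ℝ) < t := lt_trans hz ht
    have : (0:ℝ) < 1 / t ^ 2 * Real.exp (-t ^ 2 / 2) := by positivity
    exact ne_of_gt this
  have : Function.support (fun t : ℝ => 1 / t ^ 2 * Real.exp (-t ^ 2 / 2)) ∩ Set.Ioi z
      = Set.Ioi z := Set.inter_eq_self_of_subset_right hsub
  rw [this, Real.volume_Ioi]
  simp

lemma B3 {z : ℝ} (hz : 0 < z) : Kt z ≤ Real.exp (-z ^ 2 / 2) / z ^ 5 := by
  have hmono : Kt z ≤ ∫ t in Set.Ioi z, 1 / z ^ 5 * (t * Real.exp (-t ^ 2 / 2)) := by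
    apply setIntegral_mono_on (integ_pow_exp hz 4)
      (integ_mul_exp.integrableOn.const_mul _) measurableSet_Ioi
    intro t ht
    have h0 : z < t := ht
    have h0' : (0:ℝ) < t := lt_trans hz h0
    rw [div_mul_eq_mul_div, one_mul, div_le_iff₀ (by positivity), mul_comm (1 / z ^ 5 : ℝ) _]
    have h5 : z ^ 5 ≤ t ^ 5 := pow_le_pow_left₀ hz.le h0.le 5
    have he := (Real.exp_pos (-t ^ 2 / 2)).le
    calc Real.exp (-t ^ 2 / 2) = (t * Real.exp (-t ^ 2 / 2) * (1 / z ^ 5)) * (z ^ 5 / t ^ 5) * (t ^ 4) := by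
          field_simp
      _ ≤ (t * Real.exp (-t ^ 2 / 2) * (1 / z ^ 5)) * 1 * (t ^ 4) := by
          apply mul_le_mul_of_nonneg_right _ (by positivity)
          apply mul_le_mul_of_nonneg_left _ (by positivity)
          rw [div_le_one (by positivity)]; exact h5
      _ = t * Real.exp (-t ^ 2 / 2) * (1 / z ^ 5) * t ^ 4 := by ring
  rw [integral_const_mul, I1] at hmono
  calc Kt z ≤ 1 / z ^ 5 * Real.exp (-z ^ 2 / 2) := hmono
    _ = Real.exp (-z ^ 2 / 2) / z ^ 5 := by ring

-- upper bound: Gt z ≤ e^{-z²/2} (1/z - 1/z³ + 3/z⁵)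
lemma Gt_upper {z : ℝ} (hz : 0 < z) :
    Gt z ≤ Real.exp (-z ^ 2 / 2) * (1 / z - 1 / z ^ 3 + 3 / z ^ 5) := by
  have b1 := B1 hz
  have b2 := B2 hz
  have b3 := B3 hz
  have k0 := Kt_nonneg z
  have e0 := (Real.exp_pos (-z ^ 2 / 2)).le
  have hring : Real.exp (-z ^ 2 / 2) * (1 / z - 1 / z ^ 3 + 3 / z ^ 5)
      = Real.exp (-z ^ 2 / 2) / z - Real.exp (-z ^ 2 / 2) / z ^ 3
        + 3 * (Real.exp (-z ^ 2 / 2) / z ^ 5) := by ring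
  linarith

-- weak upper: z * Gt z ≤ e^{-z²/2}, and strict
lemma Gt_le_div {z : ℝ} (hz : 0 < z) : Gt z ≤ Real.exp (-z ^ 2 / 2) / z := by
  have := B1 hz; linarith [Jt_nonneg z]

lemma Gt_lt_div {z : ℝ} (hz : 0 < z) : Gt z < Real.exp (-z ^ 2 / 2) / z := by
  have := B1 hz; linarith [Jt_pos hz]

-- lower: Gt z ≥ e^{-z²/2}(1/z - 1/z³)
lemma Gt_lower {z : ℝ} (hz : 0 < z) :
    Real.exp (-z ^ 2 / 2) * (1 / z - 1 / z ^ 3) ≤ Gt z := by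
  have b1 := B1 hz
  have b2 := B2 hz
  have k0 := Kt_nonneg z
  have hring : Real.exp (-z ^ 2 / 2) * (1 / z - 1 / z ^ 3)
      = Real.exp (-z ^ 2 / 2) / z - Real.exp (-z ^ 2 / 2) / z ^ 3 := by ring
  linarith



noncomputable def qf (z : ℝ) : ℝ := Real.exp (-z ^ 2 / 2) / Gt z

lemma condMean_eq (z : ℝ) : condMean z = qf z - z := rfl

lemma condDens_eq (z x : ℝ) : condDens z x = Real.exp (-(x + z) ^ 2 / 2) / Gt z := rfl

lemma mass_eq (z : ℝ) {a b : ℝ} (h : a ≤ b) :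
    (∫ t in Set.Ioo a b, condDens z t) = (Gt (a + z) - Gt (b + z)) / Gt z := by
  have h1 : (∫ t in Set.Ioo a b, condDens z t)
      = (∫ t in Set.Ioo a b, Real.exp (-(t + z) ^ 2 / 2)) / Gt z := by
    simp_rw [condDens_eq, div_eq_mul_inv, integral_mul_const]
  rw [h1]
  congr 1
  rw [← integral_Ioc_eq_integral_Ioo, ← intervalIntegral.integral_of_le h]
  have h2 : (∫ t in a..b, Real.exp (-(t + z) ^ 2 / 2))
      = ∫ u in (a+z)..(b+z), Real.exp (-u ^ 2 / 2) := by
    rw [← intervalIntegral.integral_comp_add_right (fun u => Real.exp (-u ^ 2 / 2)) z]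
  rw [h2, intervalIntegral.integral_of_le (by linarith : a + z ≤ b + z)]
  have := Gt_split (by linarith : a + z ≤ b + z)
  linarith

lemma Gt_eq_primitive (z : ℝ) :
    Gt z = Gt 0 - ∫ t in (0:ℝ)..z, Real.exp (-t ^ 2 / 2) := by
  rcases le_total 0 z with h | h
  · rw [intervalIntegral.integral_of_le h, integral_Ioc_eq_integral_Ioo,
      ← integral_Ioc_eq_integral_Ioo]
    have := Gt_split h; linarith
  · rw [intervalIntegral.integral_of_ge h, integral_Ioc_eq_integral_Ioo,
      ← integral_Ioc_eq_integral_Ioo]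
    have := Gt_split h; linarith

lemma Gt_cont : Continuous Gt := by
  have : Continuous fun z : ℝ => ∫ t in (0:ℝ)..z, Real.exp (-t ^ 2 / 2) :=
    intervalIntegral.continuous_primitive (fun a b => integ_exp.intervalIntegrable) 0
  have h2 : Continuous fun z : ℝ => Gt 0 - ∫ t in (0:ℝ)..z, Real.exp (-t ^ 2 / 2) :=
    continuous_const.sub this
  exact h2.congr fun z => (Gt_eq_primitive z).symm

lemma qf_cont : Continuous qf := by
  apply Continuous.div
  · exact Real.continuous_exp.comp (by continuity)
  · exact Gt_cont
  · exact fun z => ne_of_gt (Gt_pos z)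

lemma condMean_cont : Continuous condMean := by
  have : condMean = fun z => qf z - z := funext condMean_eq
  rw [this]; exact qf_cont.sub continuous_id


noncomputable def mf (z : ℝ) : ℝ := qf z - z

lemma qf_pos (z : ℝ) : 0 < qf z := div_pos (Real.exp_pos _) (Gt_pos z)

lemma mf_pos (z : ℝ) : 0 < mf z := by
  rcases le_or_gt z 0 with h | h
  · have := qf_pos z; unfold mf; linarith
  · have h1 := Gt_lt_div h
    have h2 := Gt_pos z
    have h3 : z < qf z := by
      rw [qf, lt_div_iff₀ h2]
      calc z * Gt z < z * (Real.exp (-z ^ 2 / 2) / z) := mul_lt_mul_of_pos_left h1 h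
        _ = Real.exp (-z ^ 2 / 2) := by field_simp
    unfold mf; linarith

lemma q_lb {z : ℝ} (hz : 3 ≤ z) : z ≤ qf z := by
  have h0 : (0:ℝ) < z := by linarith
  have h1 := Gt_le_div h0
  rw [qf, le_div_iff₀ (Gt_pos z)]
  calc z * Gt z ≤ z * (Real.exp (-z ^ 2 / 2) / z) := mul_le_mul_of_nonneg_left h1 h0.le
    _ = Real.exp (-z ^ 2 / 2) := by field_simp

lemma q_ub {z : ℝ} (hz : 3 ≤ z) : qf z ≤ z ^ 3 / (z ^ 2 - 1) := by
  have h0 : (0:ℝ) < z := by linarith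
  have e0 := Real.exp_pos (-z ^ 2 / 2)
  have hu : Real.exp (-z ^ 2 / 2) * ((z ^ 2 - 1) / z ^ 3) ≤ Gt z := by
    have := Gt_lower h0
    have heq : (1 / z - 1 / z ^ 3) = (z ^ 2 - 1) / z ^ 3 := by field_simp
    rwa [heq] at this
  have hupos : (0:ℝ) < Real.exp (-z ^ 2 / 2) * ((z ^ 2 - 1) / z ^ 3) := by
    apply mul_pos e0; apply div_pos (by nlinarith) (by positivity)
  have := div_le_div_of_nonneg_left e0.le hupos hu
  rw [qf]
  calc Real.exp (-z ^ 2 / 2) / Gt z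
      ≤ Real.exp (-z ^ 2 / 2) / (Real.exp (-z ^ 2 / 2) * ((z ^ 2 - 1) / z ^ 3)) := this
    _ = z ^ 3 / (z ^ 2 - 1) := by
        rw [div_mul_eq_div_div, div_self (ne_of_gt e0), one_div, inv_div]

lemma m_ub {z : ℝ} (hz : 3 ≤ z) : mf z ≤ 2 / z := by
  have h0 : (0:ℝ) < z := by linarith
  have h1 := q_ub hz
  have h2 : z ^ 3 / (z ^ 2 - 1) - z ≤ 2 / z := by
    rw [div_sub' (by nlinarith : z ^ 2 - 1 ≠ 0), div_le_div_iff₀ (by nlinarith) h0]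
    nlinarith
  unfold mf; linarith

lemma m_lb {z : ℝ} (hz : 3 ≤ z) : 1 / (4 * z) ≤ mf z := by
  have h0 : (0:ℝ) < z := by linarith
  have e0 := Real.exp_pos (-z ^ 2 / 2)
  have hdpos : (0:ℝ) < z ^ 4 - z ^ 2 + 3 := by nlinarith [sq_nonneg (z ^ 2 - 1)]
  have hu : Gt z ≤ Real.exp (-z ^ 2 / 2) * ((z ^ 4 - z ^ 2 + 3) / z ^ 5) := by
    have := Gt_upper h0
    have heq : (1 / z - 1 / z ^ 3 + 3 / z ^ 5) = (z ^ 4 - z ^ 2 + 3) / z ^ 5 := by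
      field_simp
    rwa [heq] at this
  have hql : z ^ 5 / (z ^ 4 - z ^ 2 + 3) ≤ qf z := by
    have := div_le_div_of_nonneg_left e0.le (Gt_pos z) hu
    rw [qf]
    calc z ^ 5 / (z ^ 4 - z ^ 2 + 3)
        = Real.exp (-z ^ 2 / 2) / (Real.exp (-z ^ 2 / 2) * ((z ^ 4 - z ^ 2 + 3) / z ^ 5)) := by
          rw [div_mul_eq_div_div, div_self (ne_of_gt e0), one_div, inv_div]
      _ ≤ Real.exp (-z ^ 2 / 2) / Gt z := this
  have h2 : 1 / (4 * z) ≤ z ^ 5 / (z ^ 4 - z ^ 2 + 3) - z := by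
    rw [div_sub' (ne_of_gt hdpos), le_div_iff₀ hdpos, div_mul_eq_mul_div,
      div_le_iff₀ (by positivity : (0:ℝ) < 4 * z)]
    nlinarith [mul_nonneg (show (0:ℝ) ≤ z ^ 2 - 9 by nlinarith)
      (show (0:ℝ) ≤ 3 * z ^ 2 + 16 by positivity)]
  unfold mf; linarith

-- positive tail bounds
lemma pos_tail {δ z : ℝ} (hδ0 : 0 < δ) (hδ1 : δ < 1) (hz : 3 ≤ z) :
    δ / 4 * Real.exp (-5 : ℝ) ≤ (Gt (qf z) - Gt (qf z + δ * mf z)) / Gt z ∧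
    δ / 4 * Real.exp (-5 : ℝ) ≤ (Gt (qf z - δ * mf z) - Gt (qf z)) / Gt z := by
  have h0 : (0:ℝ) < z := by linarith
  have hq1 := q_lb hz
  have hq2 : qf z ≤ z + 2 / z := by
    have := q_ub hz
    have : z ^ 3 / (z ^ 2 - 1) ≤ z + 2 / z := by
      rw [div_le_iff₀ (by nlinarith : (0:ℝ) < z ^ 2 - 1)]
      have hzne : z ≠ 0 := ne_of_gt h0
      field_simp
      nlinarith
    linarith [q_ub hz]
  have hm1 := m_lb hz
  have hm2 := m_ub hz
  have hmpos := mf_pos z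
  have hδm : δ * mf z ≤ 2 / z := by
    calc δ * mf z ≤ 1 * mf z := mul_le_mul_of_nonneg_right hδ1.le hmpos.le
      _ = mf z := by ring
      _ ≤ 2 / z := hm2
  have hδm0 : 0 < δ * mf z := mul_pos hδ0 hmpos
  have hGz := Gt_pos z
  have hGdiv := Gt_le_div h0
  have e0 := Real.exp_pos (-z ^ 2 / 2)
  have hlen : δ / (4 * z) ≤ δ * mf z := by
    have h1z : (1:ℝ) ≤ mf z * (4 * z) := by
      have := (div_le_iff₀ (by positivity : (0:ℝ) < 4 * z)).mp hm1
      linarith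
    rw [div_le_iff₀ (by positivity : (0:ℝ) < 4 * z)]
    nlinarith
  constructor
  · -- right interval
    have hab : qf z ≤ qf z + δ * mf z := by linarith
    have hkey := Gt_sub_ge hab
    have hmax : max ((qf z) ^ 2) ((qf z + δ * mf z) ^ 2) = (qf z + δ * mf z) ^ 2 := by
      apply max_eq_right; nlinarith [qf_pos z]
    rw [hmax] at hkey
    have hexp : Real.exp (-(z ^ 2 + 10) / 2) ≤ Real.exp (-(qf z + δ * mf z) ^ 2 / 2) := by
      apply Real.exp_le_exp.2
      have : (qf z + δ * mf z) ^ 2 ≤ z ^ 2 + 10 := by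
        have h44 : (2:ℝ) / z + 2 / z = 4 / z := by ring
        have hub : qf z + δ * mf z ≤ z + 4 / z := by linarith
        have hzz : z * (4 / z) = 4 := by field_simp
        have h4 : (z + 4 / z) ^ 2 ≤ z ^ 2 + 10 := by
          have hsq : (4 / z) ^ 2 ≤ 2 := by
            rw [div_pow, div_le_iff₀ (by positivity)]; nlinarith
          nlinarith
        nlinarith [qf_pos z, hδm0]
      linarith
    have hnum : δ / (4 * z) * Real.exp (-(z ^ 2 + 10) / 2)
        ≤ Gt (qf z) - Gt (qf z + δ * mf z) := by
      have hlen2 : δ / (4 * z) ≤ (qf z + δ * mf z - qf z) := by linarith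
      calc δ / (4 * z) * Real.exp (-(z ^ 2 + 10) / 2)
          ≤ (qf z + δ * mf z - qf z) * Real.exp (-(qf z + δ * mf z) ^ 2 / 2) := by
            apply mul_le_mul hlen2 hexp (Real.exp_pos _).le (by linarith)
        _ ≤ Gt (qf z) - Gt (qf z + δ * mf z) := hkey
    rw [le_div_iff₀ hGz]
    calc δ / 4 * Real.exp (-5 : ℝ) * Gt z
        ≤ δ / 4 * Real.exp (-5 : ℝ) * (Real.exp (-z ^ 2 / 2) / z) := by
          apply mul_le_mul_of_nonneg_left hGdiv (by positivity)
      _ = δ / (4 * z) * Real.exp (-(z ^ 2 + 10) / 2) := by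
          rw [show (-(z ^ 2 + 10) / 2 : ℝ) = (-5) + (-z ^ 2 / 2) by ring, Real.exp_add]
          field_simp
          try ring
      _ ≤ Gt (qf z) - Gt (qf z + δ * mf z) := hnum
  · -- left interval
    have hab : qf z - δ * mf z ≤ qf z := by linarith
    have hkey := Gt_sub_ge hab
    have hl0 : 0 < qf z - δ * mf z := by
      have hd : δ * mf z < mf z := by
        have h := mul_lt_mul_of_pos_right hδ1 hmpos
        linarith
      have hqm : qf z - mf z = z := by unfold mf; ring
      linarith
    have hmax : max ((qf z - δ * mf z) ^ 2) ((qf z) ^ 2) = (qf z) ^ 2 := by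
      apply max_eq_right; nlinarith [qf_pos z, hδm0, hl0]
    rw [hmax] at hkey
    have hexp : Real.exp (-(z ^ 2 + 10) / 2) ≤ Real.exp (-(qf z) ^ 2 / 2) := by
      apply Real.exp_le_exp.2
      have : (qf z) ^ 2 ≤ z ^ 2 + 10 := by
        have hzz : z * (2 / z) = 2 := by field_simp
        have h4 : (z + 2 / z) ^ 2 ≤ z ^ 2 + 10 := by
          have hsq : (2 / z) ^ 2 ≤ 1 := by
            rw [div_pow, div_le_iff₀ (by positivity)]; nlinarith
          nlinarith
        nlinarith [qf_pos z]
      linarith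
    have hnum : δ / (4 * z) * Real.exp (-(z ^ 2 + 10) / 2)
        ≤ Gt (qf z - δ * mf z) - Gt (qf z) := by
      have hlen2 : δ / (4 * z) ≤ (qf z - (qf z - δ * mf z)) := by linarith
      calc δ / (4 * z) * Real.exp (-(z ^ 2 + 10) / 2)
          ≤ (qf z - (qf z - δ * mf z)) * Real.exp (-(qf z) ^ 2 / 2) := by
            apply mul_le_mul hlen2 hexp (Real.exp_pos _).le (by linarith)
        _ ≤ Gt (qf z - δ * mf z) - Gt (qf z) := hkey
    rw [le_div_iff₀ hGz]
    calc δ / 4 * Real.exp (-5 : ℝ) * Gt z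
        ≤ δ / 4 * Real.exp (-5 : ℝ) * (Real.exp (-z ^ 2 / 2) / z) := by
          apply mul_le_mul_of_nonneg_left hGdiv (by positivity)
      _ = δ / (4 * z) * Real.exp (-(z ^ 2 + 10) / 2) := by
          rw [show (-(z ^ 2 + 10) / 2 : ℝ) = (-5) + (-z ^ 2 / 2) by ring, Real.exp_add]
          field_simp
          try ring
      _ ≤ Gt (qf z - δ * mf z) - Gt (qf z) := hnum



lemma Gt_le_three (z : ℝ) : Gt z ≤ 3 := by
  have h1 := Gt_le_total z
  have h2 : Real.sqrt (2 * Real.pi) ≤ 3 := by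
    rw [show (3:ℝ) = Real.sqrt 9 by
      rw [show (9:ℝ) = 3 ^ 2 by norm_num, Real.sqrt_sq (by norm_num)]]
    exact Real.sqrt_le_sqrt (by nlinarith [Real.pi_le_four])
  linarith

lemma Gt_zero_lb : Real.exp (-1/2 : ℝ) ≤ Gt 0 := by
  have h := Gt_sub_ge (by norm_num : (0:ℝ) ≤ 1)
  have h2 : (0:ℝ) < Gt 1 := Gt_pos 1
  have h3 : max ((0:ℝ) ^ 2) ((1:ℝ) ^ 2) = 1 := by norm_num
  rw [h3] at h
  have : (1 - 0 : ℝ) * Real.exp (-1 / 2) = Real.exp (-1/2 : ℝ) := by ring_nf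
  linarith [h, this]

lemma neg_tail {δ z : ℝ} (hδ0 : 0 < δ) (hδ1 : δ < 1) (hz : z ≤ -(2 + 1/δ)) :
    Real.exp (-1 : ℝ) / 3 ≤ (Gt (qf z) - Gt (qf z + δ * mf z)) / Gt z ∧
    Real.exp (-1 : ℝ) / 3 ≤ (Gt (qf z - δ * mf z) - Gt (qf z)) / Gt z := by
  have hδinv : (1:ℝ) < 1/δ := by
    rw [lt_div_iff₀ hδ0]; linarith
  have hz3 : z ≤ -3 := by linarith
  have hGz := Gt_pos z
  have hG3 := Gt_le_three z
  have hq0 := qf_pos z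
  have hq4 : qf z ≤ 1/4 := by
    have hE : Real.exp (-z ^ 2 / 2) ≤ Real.exp (-9/2 : ℝ) := by
      apply Real.exp_le_exp.2; nlinarith
    have hGlb : Real.exp (-1/2 : ℝ) ≤ Gt z := le_trans Gt_zero_lb (Gt_anti (by linarith))
    have h1 : qf z ≤ Real.exp (-9/2 : ℝ) / Real.exp (-1/2 : ℝ) :=
      div_le_div₀ (Real.exp_pos _).le hE (Real.exp_pos _) hGlb
    have h2 : Real.exp (-9/2 : ℝ) / Real.exp (-1/2 : ℝ) = Real.exp (-4 : ℝ) := by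
      rw [← Real.exp_sub]; norm_num
    have h3 : Real.exp (-4 : ℝ) ≤ 1/4 := by
      rw [Real.exp_neg]
      rw [inv_le_comm₀ (Real.exp_pos _) (by norm_num)]
      have := Real.add_one_le_exp (4:ℝ)
      norm_num
      linarith
    linarith
  have hδm : 1 ≤ δ * mf z := by
    have hm : 1/δ ≤ mf z := by
      have : (1:ℝ)/δ ≤ -z := by linarith
      unfold mf; linarith
    calc (1:ℝ) = δ * (1/δ) := by field_simp
      _ ≤ δ * mf z := mul_le_mul_of_nonneg_left hm hδ0.le
  constructor
  · have ha1 : Gt (qf z + δ * mf z) ≤ Gt (qf z + 1) := Gt_anti (by linarith)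
    have hkey := Gt_sub_ge (by linarith : qf z ≤ qf z + 1)
    have hmax : max ((qf z) ^ 2) ((qf z + 1) ^ 2) = (qf z + 1) ^ 2 :=
      max_eq_right (by nlinarith)
    rw [hmax] at hkey
    have hexp : Real.exp (-1 : ℝ) ≤ Real.exp (-(qf z + 1) ^ 2 / 2) := by
      apply Real.exp_le_exp.2; nlinarith
    rw [le_div_iff₀ hGz]
    have hnum : Real.exp (-1 : ℝ) ≤ Gt (qf z) - Gt (qf z + δ * mf z) := by
      have : (qf z + 1 - qf z) * Real.exp (-(qf z + 1) ^ 2 / 2)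
          = Real.exp (-(qf z + 1) ^ 2 / 2) := by ring
      nlinarith [hkey, ha1, hexp]
    nlinarith [Real.exp_pos (-1 : ℝ)]
  · have ha1 : Gt (qf z - 1) ≤ Gt (qf z - δ * mf z) := Gt_anti (by linarith)
    have hkey := Gt_sub_ge (by linarith : qf z - 1 ≤ qf z)
    have hmaxle : max ((qf z - 1) ^ 2) ((qf z) ^ 2) ≤ 1 := by
      apply max_le <;> nlinarith
    have hexp : Real.exp (-1 : ℝ) ≤ Real.exp (-(max ((qf z - 1) ^ 2) ((qf z) ^ 2)) / 2) := by
      apply Real.exp_le_exp.2; linarith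
    rw [le_div_iff₀ hGz]
    have hnum : Real.exp (-1 : ℝ) ≤ Gt (qf z - δ * mf z) - Gt (qf z) := by
      nlinarith [hkey, ha1, hexp]
    nlinarith [Real.exp_pos (-1 : ℝ)]




lemma mf_cont : Continuous mf := by
  have : mf = fun z => qf z - z := rfl
  rw [this]; exact qf_cont.sub continuous_id

lemma F_pos {δ : ℝ} (hδ0 : 0 < δ) (z : ℝ) :
    0 < (Gt (qf z) - Gt (qf z + δ * mf z)) / Gt z ∧
    0 < (Gt (qf z - δ * mf z) - Gt (qf z)) / Gt z := by
  have hδm : 0 < δ * mf z := mul_pos hδ0 (mf_pos z)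
  constructor
  · apply div_pos _ (Gt_pos z)
    have h := Gt_sub_ge (by linarith : qf z ≤ qf z + δ * mf z)
    have : 0 < (qf z + δ * mf z - qf z) *
        Real.exp (-(max ((qf z) ^ 2) ((qf z + δ * mf z) ^ 2)) / 2) := by
      apply mul_pos (by linarith) (Real.exp_pos _)
    linarith
  · apply div_pos _ (Gt_pos z)
    have h := Gt_sub_ge (by linarith : qf z - δ * mf z ≤ qf z)
    have : 0 < (qf z - (qf z - δ * mf z)) *
        Real.exp (-(max ((qf z - δ * mf z) ^ 2) ((qf z) ^ 2)) / 2) := by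
      apply mul_pos (by linarith) (Real.exp_pos _)
    linarith

lemma compact_part {δ : ℝ} (hδ0 : 0 < δ) :
    ∃ c > (0:ℝ), ∀ z ∈ Set.Icc (-(2 + 1/δ)) 3,
      c ≤ (Gt (qf z) - Gt (qf z + δ * mf z)) / Gt z ∧
      c ≤ (Gt (qf z - δ * mf z) - Gt (qf z)) / Gt z := by
  set F : ℝ → ℝ := fun z =>
    min ((Gt (qf z) - Gt (qf z + δ * mf z)) / Gt z)
        ((Gt (qf z - δ * mf z) - Gt (qf z)) / Gt z) with hF
  have hcont : Continuous F := by
    apply Continuous.min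
    · apply Continuous.div
      · exact (Gt_cont.comp qf_cont).sub
          (Gt_cont.comp (qf_cont.add (continuous_const.mul mf_cont)))
      · exact Gt_cont
      · exact fun z => ne_of_gt (Gt_pos z)
    · apply Continuous.div
      · exact (Gt_cont.comp (qf_cont.sub (continuous_const.mul mf_cont))).sub
          (Gt_cont.comp qf_cont)
      · exact Gt_cont
      · exact fun z => ne_of_gt (Gt_pos z)
  have hne : (Set.Icc (-(2 + 1/δ)) (3:ℝ)).Nonempty := by
    refine ⟨3, ?_, le_refl _⟩
    have : 0 < 1/δ := by positivity
    linarith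
  obtain ⟨x₀, hx₀, hmin⟩ := isCompact_Icc.exists_isMinOn hne hcont.continuousOn
  refine ⟨F x₀, ?_, ?_⟩
  · have h := F_pos hδ0 x₀
    exact lt_min h.1 h.2
  · intro z hz
    have h := hmin hz
    exact ⟨le_trans (le_trans h (min_le_left _ _)) (le_refl _),
      le_trans (le_trans h (min_le_right _ _)) (le_refl _)⟩

theorem condDens_mass_near_mean :
    ∀ δ : ℝ, 0 < δ → δ < 1 → ∃ c > (0 : ℝ), ∀ z : ℝ,
      c ≤ (∫ t in Set.Ioo (condMean z) ((1 + δ) * condMean z), condDens z t) ∧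
      c ≤ (∫ t in Set.Ioo ((1 - δ) * condMean z) (condMean z), condDens z t) := by
  intro δ hδ0 hδ1
  obtain ⟨c₀, hc₀, hcomp⟩ := compact_part hδ0
  refine ⟨min c₀ (min (δ / 4 * Real.exp (-5 : ℝ)) (Real.exp (-1 : ℝ) / 3)), ?_, ?_⟩
  · have h1 : (0:ℝ) < δ / 4 * Real.exp (-5 : ℝ) := by positivity
    have h2 : (0:ℝ) < Real.exp (-1 : ℝ) / 3 := by positivity
    exact lt_min hc₀ (lt_min h1 h2)
  intro z
  have hmeq : condMean z = mf z := rfl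
  have hmpos := mf_pos z
  have e1 : condMean z + z = qf z := by rw [hmeq]; unfold mf; ring
  have e2 : (1 + δ) * condMean z + z = qf z + δ * mf z := by
    rw [hmeq]; unfold mf; ring
  have e3 : (1 - δ) * condMean z + z = qf z - δ * mf z := by
    rw [hmeq]; unfold mf; ring
  have hab1 : condMean z ≤ (1 + δ) * condMean z := by nlinarith
  have hab2 : (1 - δ) * condMean z ≤ condMean z := by nlinarith
  have hr : (∫ t in Set.Ioo (condMean z) ((1 + δ) * condMean z), condDens z t)
      = (Gt (qf z) - Gt (qf z + δ * mf z)) / Gt z := by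
    rw [mass_eq z hab1, e1, e2]
  have hl : (∫ t in Set.Ioo ((1 - δ) * condMean z) (condMean z), condDens z t)
      = (Gt (qf z - δ * mf z) - Gt (qf z)) / Gt z := by
    rw [mass_eq z hab2, e3, e1]
  rw [hr, hl]
  rcases le_total z (-(2 + 1/δ)) with hz | hz
  · have h := neg_tail hδ0 hδ1 hz
    have hm2 : min c₀ (min (δ / 4 * Real.exp (-5 : ℝ)) (Real.exp (-1 : ℝ) / 3))
        ≤ Real.exp (-1 : ℝ) / 3 := le_trans (min_le_right _ _) (min_le_right _ _)
    exact ⟨le_trans hm2 h.1, le_trans hm2 h.2⟩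
  · rcases le_total z 3 with hz3 | hz3
    · have h := hcomp z ⟨hz, hz3⟩
      have hm1 : min c₀ (min (δ / 4 * Real.exp (-5 : ℝ)) (Real.exp (-1 : ℝ) / 3)) ≤ c₀ :=
        min_le_left _ _
      exact ⟨le_trans hm1 h.1, le_trans hm1 h.2⟩
    · have h := pos_tail hδ0 hδ1 hz3
      have hm2 : min c₀ (min (δ / 4 * Real.exp (-5 : ℝ)) (Real.exp (-1 : ℝ) / 3))
          ≤ δ / 4 * Real.exp (-5 : ℝ) := le_trans (min_le_right _ _) (min_le_left _ _)
      exact ⟨le_trans hm2 h.1, le_trans hm2 h.2⟩
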